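/- Let A, E ∈ ℂ^{n×n}, B ∈ ℂ^{n×1}, C ∈ ℂ^{1×n}, let Q ∈ ℂ^{n×n} be any matrix, let η_1, …, η_r ∈ ℂ be such that each η_j E − A is invertible, let V_r ∈ ℂ^{n×r} have j-th column (η_j E − A)^{-1} B, and set W_r = Q E V_r. Define A_r = W_r^* A V_r, E_r = W_r^* E V_r, B_r = W_r^* B, C_r = C V_r, and fix 1 ≤ j ≤ r with η_j E_r − A_r invertible. Then the ISRK reduced model interpolates the full transfer function at each shift: C_r (η_j E_r − A_r)^{-1} B_r = C (η_j E − A)^{-1} B. -/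

import Mathlib

open Matrix

/-- ISRK interpolation property: with right basis `V_r` whose
`j`-th column is `(η_j E − A)⁻¹ B` and left basis `W_r = Q E V_r` for any `Q`,
the reduced transfer function matches the full one at each shift `η_j` (whenever
the reduced pencil is invertible there). -/
theorem stmt15 (n r : ℕ)
    (A E : Matrix (Fin n) (Fin n) ℂ) (B : Matrix (Fin n) (Fin 1) ℂ)
    (C : Matrix (Fin 1) (Fin n) ℂ) (Q : Matrix (Fin n) (Fin n) ℂ)
    (η : Fin r → ℂ) (hη : ∀ j, IsUnit (η j • E - A).det)
    (V : Matrix (Fin n) (Fin r) ℂ)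
    (hV : ∀ (x : Fin n) (j : Fin r), V x j = ((η j • E - A)⁻¹ * B) x 0)
    (W : Matrix (Fin n) (Fin r) ℂ) (hW : W = Q * E * V)
    (Ar Er : Matrix (Fin r) (Fin r) ℂ)
    (Br : Matrix (Fin r) (Fin 1) ℂ) (Cr : Matrix (Fin 1) (Fin r) ℂ)
    (hAr : Ar = Wᴴ * A * V) (hEr : Er = Wᴴ * E * V)
    (hBr : Br = Wᴴ * B) (hCr : Cr = C * V)
    (j : Fin r) (hred : IsUnit (η j • Er - Ar).det) :
    Cr * (η j • Er - Ar)⁻¹ * Br = C * (η j • E - A)⁻¹ * B := by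
  set M : Matrix (Fin n) (Fin n) ℂ := η j • E - A with hM
  -- standard basis column
  set e : Matrix (Fin r) (Fin 1) ℂ := fun i _ => if i = j then 1 else 0 with he
  have hVe : V * e = M⁻¹ * B := by
    ext x k
    have hk : k = 0 := Subsingleton.elim _ _
    subst hk
    simp only [Matrix.mul_apply]; simp only [he]
    rw [Finset.sum_eq_single j]
    · simp [hV x j, Matrix.mul_apply, hM]
    · intro b _ hb; simp [hb]
    · intro h; simp at h
  have hpencil : η j • Er - Ar = Wᴴ * (M * V) := by
    rw [hEr, hAr, hM, Matrix.mul_assoc, Matrix.mul_assoc, Matrix.sub_mul,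
      Matrix.smul_mul, Matrix.mul_sub, Matrix.mul_smul]
  have hMinv : M * M⁻¹ = 1 := Matrix.mul_nonsing_inv M (hη j)
  have hBe : (η j • Er - Ar) * e = Br := by
    rw [hpencil, hBr, Matrix.mul_assoc, Matrix.mul_assoc, hVe,
      ← Matrix.mul_assoc M, hMinv, Matrix.one_mul]
  have heq : (η j • Er - Ar)⁻¹ * Br = e := by
    rw [← hBe, ← Matrix.mul_assoc, Matrix.nonsing_inv_mul _ hred, Matrix.one_mul]
  rw [Matrix.mul_assoc, heq, hCr, Matrix.mul_assoc, hVe, ← Matrix.mul_assoc]
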